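/- arXiv:1011.5305 — 10 statements merged into one kernel-verified Lean document; each statement's English description precedes it below -/
import Mathlib

section
/- For a complex number q with 0 < |q| < 1 and natural numbers n ≥ 1 and α ≥ 1, the weighted q-Bernoulli number satisfies the series identity: β̃_{n,q}^{(α)} = -(nα/[α]_q) · ∑_{m=0}^∞ q^{mα+m} [m]_{q^α}^{n-1} + (1-q) · ∑_{m=0}^∞ q^m [m]_{q^α}^n, where both series converge absolutely. -/
open Finset

noncomputable def qnum (q : ℂ) (x : ℕ) : ℂ := (1 - q ^ x) / (1 - q)

noncomputable def qB (q : ℂ) (a n : ℕ) : ℂ :=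
  (1 - q) / (1 - q ^ a) ^ n *
    ∑ l ∈ Finset.range (n + 1),
      (n.choose l : ℂ) * (-1) ^ l * ((a : ℂ) * l + 1) / (1 - q ^ (a * l + 1))

noncomputable def qBpoly (q : ℂ) (a n x : ℕ) : ℂ :=
  (1 - q) / (1 - q ^ a) ^ n *
    ∑ l ∈ Finset.range (n + 1),
      (n.choose l : ℂ) * (-1) ^ l * q ^ (a * l * x) * ((a : ℂ) * l + 1) / (1 - q ^ (a * l + 1))

lemma my_expand (q : ℂ) (a c k m : ℕ) :
    q ^ (c * m) * qnum (q ^ a) m ^ k =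
      ∑ l ∈ range (k + 1),
        ((1 - q ^ a)⁻¹ ^ k * ((k.choose l : ℂ) * (-1) ^ l)) * (q ^ (a * l + c)) ^ m := by
  have ht : (1 - (q ^ a) ^ m) ^ k
      = ∑ l ∈ range (k + 1), (-((q ^ a) ^ m)) ^ l * (k.choose l : ℂ) := by
    simpa [neg_add_eq_sub] using add_pow (-((q ^ a) ^ m)) 1 k
  rw [qnum, div_eq_mul_inv, mul_pow, ht, sum_mul, mul_sum]
  refine sum_congr rfl fun l _ => ?_
  have e : (q ^ (a * l + c)) ^ m = q ^ (c * m) * ((q ^ a) ^ m) ^ l := by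
    rw [← pow_mul, ← pow_mul, ← pow_mul, ← pow_add]
    congr 1
    ring
  rw [neg_pow, e]
  ring

lemma my_summable (q : ℂ) (hq1 : ‖q‖ < 1) (a c k : ℕ) (ha : 1 ≤ a) (hc : 1 ≤ c) :
    Summable (fun m : ℕ => ‖q ^ (c * m) * qnum (q ^ a) m ^ k‖) := by
  have hqa : ‖q ^ a‖ < 1 := by
    rw [norm_pow]; exact pow_lt_one₀ (norm_nonneg q) hq1 (by omega)
  set B : ℝ := (2 * ‖(1 - q ^ a)⁻¹‖) ^ k with hB
  apply Summable.of_nonneg_of_le (fun m => norm_nonneg _) (f := fun m => B * ‖q‖ ^ m)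
  · intro m
    rw [norm_mul, norm_pow, norm_pow, mul_comm B]
    have h1 : ‖qnum (q ^ a) m‖ ≤ 2 * ‖(1 - q ^ a)⁻¹‖ := by
      rw [qnum, div_eq_mul_inv, norm_mul]
      gcongr
      calc ‖1 - (q ^ a) ^ m‖ ≤ ‖(1 : ℂ)‖ + ‖(q ^ a) ^ m‖ := norm_sub_le _ _
        _ ≤ 1 + 1 := by
            rw [norm_one, norm_pow]
            exact add_le_add le_rfl (pow_le_one₀ (norm_nonneg _) hqa.le)
        _ = 2 := by norm_num
    have h2 : ‖q‖ ^ (c * m) ≤ ‖q‖ ^ m :=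
      pow_le_pow_of_le_one (norm_nonneg q) hq1.le (Nat.le_mul_of_pos_left m (by omega))
    have h3 : ‖qnum (q ^ a) m‖ ^ k ≤ B := by
      rw [hB]; exact pow_le_pow_left₀ (norm_nonneg _) h1 k
    exact mul_le_mul h2 h3 (pow_nonneg (norm_nonneg _) _) (pow_nonneg (norm_nonneg _) _)
  · exact (summable_geometric_of_lt_one (norm_nonneg q) hq1).mul_left B

lemma my_tsum (q : ℂ) (hq1 : ‖q‖ < 1) (a c k : ℕ) (hc : 1 ≤ c) :
    ∑' m : ℕ, q ^ (c * m) * qnum (q ^ a) m ^ k =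
      (1 - q ^ a)⁻¹ ^ k *
        ∑ l ∈ range (k + 1), (k.choose l : ℂ) * (-1) ^ l * (1 - q ^ (a * l + c))⁻¹ := by
  have hl : ∀ l : ℕ, ‖q ^ (a * l + c)‖ < 1 := fun l => by
    rw [norm_pow]; exact pow_lt_one₀ (norm_nonneg q) hq1 (by omega)
  calc ∑' m : ℕ, q ^ (c * m) * qnum (q ^ a) m ^ k
      = ∑' m : ℕ, ∑ l ∈ range (k + 1),
          ((1 - q ^ a)⁻¹ ^ k * ((k.choose l : ℂ) * (-1) ^ l)) * (q ^ (a * l + c)) ^ m :=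
        tsum_congr fun m => my_expand q a c k m
    _ = ∑ l ∈ range (k + 1), ∑' m : ℕ,
          ((1 - q ^ a)⁻¹ ^ k * ((k.choose l : ℂ) * (-1) ^ l)) * (q ^ (a * l + c)) ^ m :=
        Summable.tsum_finsetSum fun l _ => (summable_geometric_of_norm_lt_one (hl l)).mul_left _
    _ = ∑ l ∈ range (k + 1),
          ((1 - q ^ a)⁻¹ ^ k * ((k.choose l : ℂ) * (-1) ^ l)) * (1 - q ^ (a * l + c))⁻¹ :=
        sum_congr rfl fun l _ => by
          rw [tsum_mul_left, tsum_geometric_of_norm_lt_one (hl l)]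
    _ = _ := by rw [mul_sum]; exact sum_congr rfl fun l _ => by ring

lemma my_core (a n : ℕ) (hn : 1 ≤ n) (X : ℕ → ℂ) :
    ∑ l ∈ range (n + 1), (n.choose l : ℂ) * (-1) ^ l * ((a : ℂ) * l + 1) * X l
      = -((n : ℂ) * a) * ∑ l ∈ range n, ((n - 1).choose l : ℂ) * (-1) ^ l * X (l + 1)
        + ∑ l ∈ range (n + 1), (n.choose l : ℂ) * (-1) ^ l * X l := by
  have key : ∀ l : ℕ, ((n.choose (l + 1) : ℂ)) * ((l : ℂ) + 1) = (n : ℂ) * ((n - 1).choose l) := by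
    intro l
    have h := Nat.add_one_mul_choose_eq (n - 1) l
    have h2 : n - 1 + 1 = n := by omega
    rw [h2] at h
    exact_mod_cast h.symm
  rw [← sub_eq_iff_eq_add, ← sum_sub_distrib,
    sum_congr rfl (fun l _ => by ring :
      ∀ l ∈ range (n + 1), (n.choose l : ℂ) * (-1) ^ l * ((a : ℂ) * l + 1) * X l
        - (n.choose l : ℂ) * (-1) ^ l * X l
        = (n.choose l : ℂ) * (-1) ^ l * ((a : ℂ) * l) * X l),
    sum_range_succ']
  simp only [Nat.cast_zero, mul_zero, zero_mul, add_zero]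
  rw [mul_sum]
  refine sum_congr rfl fun l _ => ?_
  have h := key l
  push_cast
  linear_combination (-(-1 : ℂ) ^ l * (a : ℂ) * X (l + 1)) * h

theorem stmt0 (q : ℂ) (hq0 : 0 < ‖q‖) (hq1 : ‖q‖ < 1)
    (n a : ℕ) (hn : 1 ≤ n) (ha : 1 ≤ a) :
    Summable (fun m : ℕ => ‖q ^ (m * a + m) * qnum (q ^ a) m ^ (n - 1)‖) ∧
    Summable (fun m : ℕ => ‖q ^ m * qnum (q ^ a) m ^ n‖) ∧
    qB q a n =
      -((n : ℂ) * a / qnum q a) * ∑' m : ℕ, q ^ (m * a + m) * qnum (q ^ a) m ^ (n - 1) +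
        (1 - q) * ∑' m : ℕ, q ^ m * qnum (q ^ a) m ^ n := by
  obtain ⟨k, rfl⟩ : ∃ k, n = k + 1 := ⟨n - 1, by omega⟩
  have hq1' : ‖q‖ < 1 := hq1
  have e1 : ∀ m : ℕ, m * a + m = (a + 1) * m := fun m => by ring
  have e2 : ∀ m : ℕ, m = 1 * m := fun m => (one_mul m).symm
  have hne : ∀ j : ℕ, 1 ≤ j → (1 : ℂ) - q ^ j ≠ 0 := by
    intro j hj
    have hlt : ‖q ^ j‖ < 1 := by
      rw [norm_pow]; exact pow_lt_one₀ (norm_nonneg q) hq1' (by omega)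
    intro hcon
    rw [sub_eq_zero] at hcon
    rw [← hcon] at hlt
    simp at hlt
  have hq : (1 : ℂ) - q ≠ 0 := by simpa using hne 1 le_rfl
  have hqa : (1 : ℂ) - q ^ a ≠ 0 := hne a ha
  refine ⟨?_, ?_, ?_⟩
  · simp only [Nat.add_sub_cancel, e1]
    exact my_summable q hq1' a (a + 1) k ha (by omega)
  · have := my_summable q hq1' a 1 (k + 1) ha le_rfl
    simpa using this
  · have T1 : (∑' m : ℕ, q ^ (m * a + m) * qnum (q ^ a) m ^ k)
        = (1 - q ^ a)⁻¹ ^ k *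
          ∑ l ∈ range (k + 1), (k.choose l : ℂ) * (-1) ^ l * (1 - q ^ (a * (l + 1) + 1))⁻¹ := by
      simp only [e1]
      rw [my_tsum q hq1' a (a + 1) k (by omega)]
      have ee : ∀ l : ℕ, a * l + (a + 1) = a * (l + 1) + 1 := fun l => by ring
      simp only [ee]
    have T2 : (∑' m : ℕ, q ^ m * qnum (q ^ a) m ^ (k + 1))
        = (1 - q ^ a)⁻¹ ^ (k + 1) *
          ∑ l ∈ range (k + 2), ((k + 1).choose l : ℂ) * (-1) ^ l * (1 - q ^ (a * l + 1))⁻¹ := by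
      have := my_tsum q hq1' a 1 (k + 1) le_rfl
      simpa using this
    have C := my_core a (k + 1) (by omega) (fun l => (1 - q ^ (a * l + 1))⁻¹)
    simp only [Nat.add_sub_cancel] at C
    simp only [Nat.add_sub_cancel, qB, qnum, div_eq_mul_inv] at *
    rw [C, T1, T2]
    push_cast
    rw [inv_pow, inv_pow]
    field_simp
    ring
end

section
/- For q ∈ ℂ with 0 < |q| < 1, α ∈ ℕ with α ≥ 1, and t ∈ ℂ, the generating function F_q^{(α)}(t) = ∑_{n=0}^∞ β̃_{n,q}^{(α)} t^n/n! satisfies F_q^{(α)}(t) = -t·(α/[α]_q) ∑_{m=0}^∞ q^{mα+m} e^{[m]_{q^α} t} + (1-q) ∑_{m=0}^∞ q^m e^{[m]_{q^α} t}. -/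
lemma binom1 (y : ℂ) (n : ℕ) :
    ∑ l ∈ Finset.range (n + 1), (n.choose l : ℂ) * (-1) ^ l * y ^ l = (1 - y) ^ n := by
  have h := add_pow (-y) 1 n
  simp only [one_pow, mul_one] at h
  rw [show (1 : ℂ) - y = -y + 1 by ring, h]
  refine Finset.sum_congr rfl fun l _ => ?_
  rw [neg_pow]
  ring

lemma binom2 (y : ℂ) (n : ℕ) :
    ∑ l ∈ Finset.range (n + 1), (n.choose l : ℂ) * (-1) ^ l * l * y ^ l
      = -(n : ℂ) * y * (1 - y) ^ (n - 1) := by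
  cases n with
  | zero => simp
  | succ k =>
    rw [Finset.sum_range_succ']
    have step : ∑ j ∈ Finset.range (k + 1),
        ((k+1).choose (j+1) : ℂ) * (-1) ^ (j+1) * ((j:ℂ)+1) * y ^ (j+1)
        = (-((k:ℂ)+1) * y) * ∑ j ∈ Finset.range (k + 1),
            (k.choose j : ℂ) * (-1) ^ j * y ^ j := by
      rw [Finset.mul_sum]
      refine Finset.sum_congr rfl fun j _ => ?_
      have h : ((k+1).choose (j+1) : ℂ) * ((j:ℂ)+1) = ((k:ℂ)+1) * (k.choose j : ℂ) := by
        exact_mod_cast congrArg (Nat.cast : ℕ → ℂ) (Nat.add_one_mul_choose_eq k j).symm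
      linear_combination ((-1:ℂ)^(j+1) * y^(j+1)) * h
    push_cast
    rw [step, binom1]
    simp

lemma exp_tsum (z : ℂ) : Complex.exp z = ∑' n : ℕ, z ^ n / (n.factorial : ℂ) := by
  rw [Complex.exp_eq_exp_ℂ, NormedSpace.exp_eq_tsum_div]

lemma summable_aux (c t : ℝ) :
    Summable fun n : ℕ => (n : ℝ) * c ^ (n - 1) * t ^ n / (n.factorial : ℝ) := by
  rw [← summable_nat_add_iff 1]
  have : (fun n : ℕ => ((n + 1 : ℕ) : ℝ) * c ^ ((n + 1) - 1) * t ^ (n + 1) / ((n + 1).factorial : ℝ))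
      = fun n : ℕ => t * ((c * t) ^ n / (n.factorial : ℝ)) := by
    funext n
    have h1 : ((n + 1).factorial : ℝ) = ((n : ℝ) + 1) * (n.factorial : ℝ) := by
      push_cast [Nat.factorial_succ]; ring
    have h2 : (n.factorial : ℝ) ≠ 0 := Nat.cast_ne_zero.2 n.factorial_ne_zero
    have h3 : ((n : ℝ) + 1) ≠ 0 := by positivity
    simp only [Nat.add_sub_cancel]
    field_simp [h1]
    rw [h1]; push_cast; ring
  rw [this]
  exact (Real.summable_pow_div_factorial (c * t)).mul_left t

lemma summable_shift (x t : ℂ) :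
    Summable fun n : ℕ => (n : ℂ) * x ^ (n - 1) * t ^ n / (n.factorial : ℂ) := by
  apply Summable.of_norm
  have : (fun n : ℕ => ‖(n : ℂ) * x ^ (n - 1) * t ^ n / (n.factorial : ℂ)‖)
      = fun n : ℕ => (n : ℝ) * ‖x‖ ^ (n - 1) * ‖t‖ ^ n / (n.factorial : ℝ) := by
    funext n
    simp [norm_mul, norm_div, norm_pow, Complex.norm_natCast]
  rw [this]
  exact summable_aux ‖x‖ ‖t‖

lemma tsum_shift (x t : ℂ) :
    ∑' n : ℕ, (n : ℂ) * x ^ (n - 1) * t ^ n / (n.factorial : ℂ) = t * Complex.exp (x * t) := by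
  rw [Summable.tsum_eq_zero_add (summable_shift x t)]
  have : (fun n : ℕ => ((n + 1 : ℕ) : ℂ) * x ^ ((n + 1) - 1) * t ^ (n + 1) / ((n + 1).factorial : ℂ))
      = fun n : ℕ => t * ((x * t) ^ n / (n.factorial : ℂ)) := by
    funext n
    have h1 : ((n + 1).factorial : ℂ) = ((n : ℂ) + 1) * (n.factorial : ℂ) := by
      push_cast [Nat.factorial_succ]; ring
    have h2 : ((n.factorial : ℂ)) ≠ 0 := Nat.cast_ne_zero.2 n.factorial_ne_zero
    have h3 : ((n : ℂ) + 1) ≠ 0 := by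
      have := Nat.cast_add_one_ne_zero (R := ℂ) n
      exact this
    simp only [Nat.add_sub_cancel]
    field_simp [h1]
    rw [h1]; push_cast; ring
  simp only [this]
  push_cast
  rw [tsum_mul_left, ← exp_tsum]
  simp

lemma qInnerSum (q : ℂ) (a n m : ℕ) :
    ∑ l ∈ Finset.range (n + 1),
        (n.choose l : ℂ) * (-1) ^ l * ((a : ℂ) * l + 1) * (q ^ (a * l + 1)) ^ m
      = q ^ m * ((1 - q ^ (a * m)) ^ n
          - (a : ℂ) * n * q ^ (a * m) * (1 - q ^ (a * m)) ^ (n - 1)) := by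
  have hpow : ∀ l : ℕ, (q ^ (a * l + 1)) ^ m = q ^ m * (q ^ (a * m)) ^ l := by
    intro l
    rw [← pow_mul, ← pow_mul, ← pow_add]
    ring_nf
  have expand : ∀ l ∈ Finset.range (n + 1),
      (n.choose l : ℂ) * (-1) ^ l * ((a : ℂ) * l + 1) * (q ^ (a * l + 1)) ^ m
      = q ^ m * ((a : ℂ) * ((n.choose l : ℂ) * (-1) ^ l * l * (q ^ (a * m)) ^ l)
          + (n.choose l : ℂ) * (-1) ^ l * (q ^ (a * m)) ^ l) := by
    intro l _
    rw [hpow l]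
    ring
  rw [Finset.sum_congr rfl expand, ← Finset.mul_sum, Finset.sum_add_distrib, ← Finset.mul_sum,
    binom1, binom2]
  ring

theorem stmt1 (q : ℂ) (hq0 : 0 < ‖q‖) (hq1 : ‖q‖ < 1)
    (a : ℕ) (ha : 1 ≤ a) (t : ℂ) :
    ∑' n : ℕ, qB q a n * t ^ n / (n.factorial : ℂ) =
      -t * ((a : ℂ) / qnum q a) *
          ∑' m : ℕ, q ^ (m * a + m) * Complex.exp (qnum (q ^ a) m * t) +
        (1 - q) * ∑' m : ℕ, q ^ m * Complex.exp (qnum (q ^ a) m * t) := by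
  have hn : ‖q‖ < 1 := by exact hq1
  have hn0 : (0 : ℝ) ≤ ‖q‖ := norm_nonneg q
  have hqk : ∀ k : ℕ, 1 ≤ k → ‖q ^ k‖ < 1 := by
    intro k hk
    rw [norm_pow]
    exact pow_lt_one₀ hn0 hn (by omega)
  have hne : ∀ k : ℕ, 1 ≤ k → (1 : ℂ) - q ^ k ≠ 0 := by
    intro k hk h
    have h1 : q ^ k = 1 := by
      have := sub_eq_zero.mp h
      exact this.symm
    have := hqk k hk
    rw [h1] at this
    simp at this
  have ha1 : (1 : ℂ) - q ^ a ≠ 0 := hne a ha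
  have hq1' : (1 : ℂ) - q ≠ 0 := by
    have := hne 1 le_rfl
    rwa [pow_one] at this
  set X : ℕ → ℂ := fun m => (1 - q ^ (a * m)) / (1 - q ^ a) with hX
  set C : ℝ := 2 / ‖1 - q ^ a‖ with hC
  have hCpos : 0 ≤ C := by positivity
  have hXb : ∀ m, ‖X m‖ ≤ C := by
    intro m
    rw [hX]
    simp only
    rw [norm_div, hC]
    gcongr
    calc ‖1 - q ^ (a * m)‖ ≤ ‖(1 : ℂ)‖ + ‖q ^ (a * m)‖ := norm_sub_le _ _
      _ ≤ 1 + 1 := by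
          rw [norm_one, norm_pow]
          gcongr
          · exact pow_le_one₀ hn0 hn.le
      _ = 2 := by norm_num
  set F1 : ℕ → ℕ → ℂ := fun n m =>
    (1 - q) * (q ^ m * ((X m * t) ^ n / (n.factorial : ℂ))) with hF1
  set F2 : ℕ → ℕ → ℂ := fun n m =>
    ((a : ℂ) * (1 - q) / (1 - q ^ a)) *
      (q ^ (a * m + m) * ((n : ℂ) * (X m) ^ (n - 1) * t ^ n / (n.factorial : ℂ))) with hF2
  -- Step A
  have hA : ∀ n, qB q a n * t ^ n / (n.factorial : ℂ) = ∑' m, (F1 n m - F2 n m) := by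
    intro n
    have hsumm : ∀ l ∈ Finset.range (n + 1), Summable fun m : ℕ =>
        (n.choose l : ℂ) * (-1) ^ l * ((a : ℂ) * l + 1) * (q ^ (a * l + 1)) ^ m := by
      intro l _
      exact (summable_geometric_of_norm_lt_one (hqk _ (by omega))).mul_left _
    have hgeo : ∀ l ∈ Finset.range (n + 1),
        (n.choose l : ℂ) * (-1) ^ l * ((a : ℂ) * l + 1) / (1 - q ^ (a * l + 1))
        = ∑' m : ℕ, (n.choose l : ℂ) * (-1) ^ l * ((a : ℂ) * l + 1) * (q ^ (a * l + 1)) ^ m := by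
      intro l _
      rw [tsum_mul_left, tsum_geometric_of_norm_lt_one (hqk _ (by omega)), div_eq_mul_inv]
    have h1 : (∑ l ∈ Finset.range (n + 1),
          (n.choose l : ℂ) * (-1) ^ l * ((a : ℂ) * l + 1) / (1 - q ^ (a * l + 1)))
        = ∑' m : ℕ, q ^ m * ((1 - q ^ (a * m)) ^ n
            - (a : ℂ) * n * q ^ (a * m) * (1 - q ^ (a * m)) ^ (n - 1)) := by
      rw [Finset.sum_congr rfl hgeo, ← Summable.tsum_finsetSum hsumm]
      exact tsum_congr fun m => qInnerSum q a n m
    rw [qB, h1]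
    rw [show ∀ K S T N : ℂ, K * S * T / N = K * (T / N) * S from fun K S T N => by ring]
    rw [← tsum_mul_left]
    refine tsum_congr fun m => ?_
    rw [hF1, hF2]
    simp only [hX]
    cases n with
    | zero => simp
    | succ k =>
      have hfac : ((k + 1).factorial : ℂ) ≠ 0 := Nat.cast_ne_zero.2 (k + 1).factorial_ne_zero
      have hpk : ((1 : ℂ) - q ^ a) ^ k ≠ 0 := pow_ne_zero _ ha1
      simp only [Nat.add_sub_cancel, mul_pow, div_pow, pow_succ, pow_add]
      field_simp
  -- Summability
  have hgs : Summable fun m : ℕ => ‖q‖ ^ m := summable_geometric_of_lt_one hn0 hn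
  have hf1 : Summable fun n : ℕ => (C * ‖t‖) ^ n / (n.factorial : ℝ) :=
    Real.summable_pow_div_factorial _
  have hf2 : Summable fun n : ℕ => (n : ℝ) * C ^ (n - 1) * ‖t‖ ^ n / (n.factorial : ℝ) :=
    summable_aux C ‖t‖
  have hXt : ∀ m, ‖X m * t‖ ≤ C * ‖t‖ := by
    intro m
    rw [norm_mul]
    exact mul_le_mul_of_nonneg_right (hXb m) (norm_nonneg t)
  have hS1 : Summable fun p : ℕ × ℕ => F1 p.1 p.2 := by
    apply Summable.of_norm_bounded (g := fun p : ℕ × ℕ => ‖1 - q‖ * ((C * ‖t‖) ^ p.1 / (p.1.factorial : ℝ) * ‖q‖ ^ p.2))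
      (((hf1.mul_of_nonneg hgs (fun n => by positivity) (fun m => by positivity)).mul_left _))
    rintro ⟨n, m⟩
    have : ‖F1 n m‖ = ‖1 - q‖ * (‖q‖ ^ m * (‖X m * t‖ ^ n / (n.factorial : ℝ))) := by
      rw [hF1]
      simp [norm_mul, norm_div, norm_pow, Complex.norm_natCast]
    rw [this]
    rw [show ∀ A B D : ℝ, A * (B * D) = A * (D * B) from fun A B D => by ring]
    gcongr
    exact hXt m
  have hS2 : Summable fun p : ℕ × ℕ => F2 p.1 p.2 := by
    apply Summable.of_norm_bounded (g := fun p : ℕ × ℕ => ‖(a : ℂ) * (1 - q) / (1 - q ^ a)‖ *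
        ((p.1 : ℝ) * C ^ (p.1 - 1) * ‖t‖ ^ p.1 / (p.1.factorial : ℝ) * ‖q‖ ^ p.2))
      (((hf2.mul_of_nonneg hgs (fun n => by positivity) (fun m => by positivity)).mul_left _))
    rintro ⟨n, m⟩
    have : ‖F2 n m‖ = ‖(a : ℂ) * (1 - q) / (1 - q ^ a)‖ *
        (‖q‖ ^ (a * m + m) * ((n : ℝ) * ‖X m‖ ^ (n - 1) * ‖t‖ ^ n / (n.factorial : ℝ))) := by
      rw [hF2]
      simp [norm_mul, norm_div, norm_pow, Complex.norm_natCast]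
    rw [this]
    have h1 : ‖q‖ ^ (a * m + m) ≤ ‖q‖ ^ m := pow_le_pow_of_le_one hn0 hn.le (by omega)
    have h2 : (n : ℝ) * ‖X m‖ ^ (n - 1) * ‖t‖ ^ n / (n.factorial : ℝ)
        ≤ (n : ℝ) * C ^ (n - 1) * ‖t‖ ^ n / (n.factorial : ℝ) := by
      gcongr
      exact hXb m
    have hD1 : (0:ℝ) ≤ (n : ℝ) * ‖X m‖ ^ (n - 1) * ‖t‖ ^ n / (n.factorial : ℝ) := by positivity
    rw [show ‖(a : ℂ) * (1 - q) / (1 - q ^ a)‖ *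
        ((n : ℝ) * C ^ (n - 1) * ‖t‖ ^ n / (n.factorial : ℝ) * ‖q‖ ^ m)
        = ‖(a : ℂ) * (1 - q) / (1 - q ^ a)‖ *
        (‖q‖ ^ m * ((n : ℝ) * C ^ (n - 1) * ‖t‖ ^ n / (n.factorial : ℝ))) from by ring]
    exact mul_le_mul_of_nonneg_left
      (mul_le_mul h1 h2 hD1 (pow_nonneg hn0 m)) (norm_nonneg _)
  -- assemble
  have rows1 : ∀ n, Summable fun m => F1 n m := fun n => hS1.prod_factor n
  have rows2 : ∀ n, Summable fun m => F2 n m := fun n => hS2.prod_factor n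
  have hcol1 : Summable fun n => ∑' m, F1 n m :=
    ⟨_, hS1.hasSum.prod_fiberwise fun n => (rows1 n).hasSum⟩
  have hcol2 : Summable fun n => ∑' m, F2 n m :=
    ⟨_, hS2.hasSum.prod_fiberwise fun n => (rows2 n).hasSum⟩
  calc ∑' n : ℕ, qB q a n * t ^ n / (n.factorial : ℂ)
      = ∑' n : ℕ, ∑' m : ℕ, (F1 n m - F2 n m) := tsum_congr hA
    _ = ∑' n : ℕ, ((∑' m : ℕ, F1 n m) - ∑' m : ℕ, F2 n m) :=
        tsum_congr fun n => Summable.tsum_sub (rows1 n) (rows2 n)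
    _ = (∑' n : ℕ, ∑' m : ℕ, F1 n m) - ∑' n : ℕ, ∑' m : ℕ, F2 n m := Summable.tsum_sub hcol1 hcol2
    _ = (∑' m : ℕ, ∑' n : ℕ, F1 n m) - ∑' m : ℕ, ∑' n : ℕ, F2 n m := by
        rw [Summable.tsum_comm (f := F1) hS1, Summable.tsum_comm (f := F2) hS2]
    _ = (∑' m : ℕ, (1 - q) * (q ^ m * Complex.exp (X m * t)))
        - ∑' m : ℕ, ((a : ℂ) * (1 - q) / (1 - q ^ a)) *
            (q ^ (a * m + m) * (t * Complex.exp (X m * t))) := by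
        congr 1
        · refine tsum_congr fun m => ?_
          have : ∀ n, F1 n m = ((1 - q) * q ^ m) * ((X m * t) ^ n / (n.factorial : ℂ)) := by
            intro n; rw [hF1]; ring
          rw [tsum_congr this, tsum_mul_left, ← exp_tsum]
          ring
        · refine tsum_congr fun m => ?_
          have : ∀ n, F2 n m = (((a : ℂ) * (1 - q) / (1 - q ^ a)) * q ^ (a * m + m)) *
              ((n : ℂ) * (X m) ^ (n - 1) * t ^ n / (n.factorial : ℂ)) := by
            intro n; rw [hF2]; ring
          rw [tsum_congr this, tsum_mul_left, tsum_shift]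
          ring
    _ = -t * ((a : ℂ) / qnum q a) *
          ∑' m : ℕ, q ^ (m * a + m) * Complex.exp (qnum (q ^ a) m * t) +
        (1 - q) * ∑' m : ℕ, q ^ m * Complex.exp (qnum (q ^ a) m * t) := by
        have hqnum : ∀ m, qnum (q ^ a) m = X m := by
          intro m
          rw [qnum, hX, ← pow_mul]
        have hK : (a : ℂ) / qnum q a = (a : ℂ) * (1 - q) / (1 - q ^ a) := by
          rw [qnum]
          field_simp
        simp only [hqnum, hK]
        have he : ∀ m : ℕ, q ^ (m * a + m) = q ^ (a * m + m) := fun m => by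
          rw [Nat.mul_comm]
        simp only [he]
        have l1 : ∑' m : ℕ, (1 - q) * (q ^ m * Complex.exp (X m * t))
            = (1 - q) * ∑' m : ℕ, q ^ m * Complex.exp (X m * t) := tsum_mul_left
        have l2 : ∑' m : ℕ, ((a : ℂ) * (1 - q) / (1 - q ^ a)) *
              (q ^ (a * m + m) * (t * Complex.exp (X m * t)))
            = (t * ((a : ℂ) * (1 - q) / (1 - q ^ a))) *
              ∑' m : ℕ, q ^ (a * m + m) * Complex.exp (X m * t) := by
          rw [← tsum_mul_left]
          exact tsum_congr fun m => by ring
        rw [l1, l2]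
        ring
end

section
/- For q ∈ ℂ with 0 < |q| < 1, α ∈ ℕ with α ≥ 1, n ∈ ℕ, and x ∈ ℕ, the weighted q-Bernoulli polynomial satisfies the addition formula β̃_{n,q}^{(α)}(x) = ∑_{l=0}^n C(n,l) [x]_{q^α}^{n-l} q^{αlx} β̃_{l,q}^{(α)}. -/
open Finset in
lemma binom_transform (F : ℕ → ℂ) (Q : ℂ) (n : ℕ) :
    ∑ l ∈ range (n + 1), (n.choose l : ℂ) * (1 - Q) ^ (n - l) * Q ^ l *
      ∑ j ∈ range (l + 1), (l.choose j : ℂ) * F j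
    = ∑ l ∈ range (n + 1), (n.choose l : ℂ) * Q ^ l * F l := by
  have swap :
      ∑ l ∈ range (n + 1), ∑ j ∈ range (l + 1),
        (n.choose l : ℂ) * (1 - Q) ^ (n - l) * Q ^ l * ((l.choose j : ℂ) * F j)
      = ∑ j ∈ range (n + 1), ∑ l ∈ Ico j (n + 1),
        (n.choose l : ℂ) * (1 - Q) ^ (n - l) * Q ^ l * ((l.choose j : ℂ) * F j) := by
    simp only [range_eq_Ico]; rw [← Finset.sum_Ico_Ico_comm]
  calc ∑ l ∈ range (n + 1), (n.choose l : ℂ) * (1 - Q) ^ (n - l) * Q ^ l *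
        ∑ j ∈ range (l + 1), (l.choose j : ℂ) * F j
      = ∑ l ∈ range (n + 1), ∑ j ∈ range (l + 1),
        (n.choose l : ℂ) * (1 - Q) ^ (n - l) * Q ^ l * ((l.choose j : ℂ) * F j) := by
        simp [Finset.mul_sum]
    _ = ∑ j ∈ range (n + 1), ∑ l ∈ Ico j (n + 1),
        (n.choose l : ℂ) * (1 - Q) ^ (n - l) * Q ^ l * ((l.choose j : ℂ) * F j) := swap
    _ = ∑ j ∈ range (n + 1), (n.choose j : ℂ) * Q ^ j * F j := by
        apply Finset.sum_congr rfl
        intro j hj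
        have hjn : j ≤ n := by simpa [Nat.lt_succ_iff] using hj
        have : ∑ l ∈ Ico j (n + 1),
            (n.choose l : ℂ) * (1 - Q) ^ (n - l) * Q ^ l * ((l.choose j : ℂ) * F j)
            = ∑ m ∈ range (n + 1 - j),
            (n.choose (j + m) : ℂ) * (1 - Q) ^ (n - (j + m)) * Q ^ (j + m) *
              (((j + m).choose j : ℂ) * F j) := by
          rw [Finset.sum_Ico_eq_sum_range]
        rw [this]
        have key : ∀ m ∈ range (n + 1 - j),
            (n.choose (j + m) : ℂ) * (1 - Q) ^ (n - (j + m)) * Q ^ (j + m) *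
              (((j + m).choose j : ℂ) * F j)
            = (n.choose j : ℂ) * Q ^ j * F j *
              (((n - j).choose m : ℂ) * Q ^ m * (1 - Q) ^ (n - j - m)) := by
          intro m hm
          have hmn : j + m ≤ n := by
            have := Finset.mem_range.mp hm; omega
          have hc : (n.choose (j + m)) * ((j + m).choose j) =
              n.choose j * (n - j).choose m := by
            have := Nat.choose_mul (n := n) (Nat.le_add_right j m)
            simpa using this
          have hc' : ((n.choose (j + m)) : ℂ) * (((j + m).choose j) : ℂ) =
              (n.choose j : ℂ) * ((n - j).choose m : ℂ) := by
            exact_mod_cast congrArg (Nat.cast : ℕ → ℂ) hc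
          have he : n - (j + m) = n - j - m := by omega
          rw [he, pow_add]
          linear_combination (Q ^ j * Q ^ m * F j * (1 - Q) ^ (n - j - m)) * hc'
        rw [Finset.sum_congr rfl key, ← Finset.mul_sum]
        have hbin : ∑ m ∈ range (n + 1 - j),
            (((n - j).choose m : ℂ) * Q ^ m * (1 - Q) ^ (n - j - m)) = 1 := by
          have h2 : n + 1 - j = (n - j) + 1 := by omega
          rw [h2]
          calc ∑ m ∈ range (n - j + 1),
              (((n - j).choose m : ℂ) * Q ^ m * (1 - Q) ^ (n - j - m))
              = ∑ m ∈ range (n - j + 1), Q ^ m * (1 - Q) ^ (n - j - m) * ((n - j).choose m : ℂ) := by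
                apply Finset.sum_congr rfl; intros; ring
            _ = (Q + (1 - Q)) ^ (n - j) := (add_pow Q (1 - Q) (n - j)).symm
            _ = 1 := by rw [show Q + (1 - Q) = 1 from by ring, one_pow]
        rw [hbin, mul_one]

open Finset in
theorem stmt3 (q : ℂ) (hq0 : 0 < ‖q‖) (hq1 : ‖q‖ < 1)
    (a : ℕ) (ha : 1 ≤ a) (n x : ℕ) :
    qBpoly q a n x =
      ∑ l ∈ Finset.range (n + 1),
        (n.choose l : ℂ) * qnum (q ^ a) x ^ (n - l) * q ^ (a * l * x) * qB q a l := by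
  have hD : (1 : ℂ) - q ^ a ≠ 0 := by
    have h1 : ‖q ^ a‖ < 1 := by
      rw [norm_pow]; exact pow_lt_one₀ (norm_nonneg q) hq1 (by omega)
    rw [sub_ne_zero]
    intro h
    rw [← h] at h1; simp at h1
  set Q : ℂ := q ^ (a * x) with hQ
  set F : ℕ → ℂ := fun j => (-1 : ℂ) ^ j * (((a : ℂ) * j + 1) / (1 - q ^ (a * j + 1))) with hF
  have hQpow : ∀ l : ℕ, q ^ (a * l * x) = Q ^ l := by
    intro l; rw [hQ, ← pow_mul]; congr 1; ring
  have hRHS : ∑ l ∈ range (n + 1),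
        (n.choose l : ℂ) * qnum (q ^ a) x ^ (n - l) * q ^ (a * l * x) * qB q a l
      = (1 - q) / (1 - q ^ a) ^ n *
          ∑ l ∈ range (n + 1), (n.choose l : ℂ) * (1 - Q) ^ (n - l) * Q ^ l *
            ∑ j ∈ range (l + 1), (l.choose j : ℂ) * F j := by
    rw [Finset.mul_sum]
    apply Finset.sum_congr rfl
    intro l hl
    have hln : l ≤ n := by simpa [Nat.lt_succ_iff] using hl
    rw [qB, qnum]
    have hBsum : ∑ j ∈ range (l + 1),
        ((l.choose j : ℂ) * (-1) ^ j * ((a : ℂ) * j + 1) / (1 - q ^ (a * j + 1)))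
        = ∑ j ∈ range (l + 1), (l.choose j : ℂ) * F j := by
      apply Finset.sum_congr rfl; intro j _
      simp only [hF]; ring
    rw [hBsum, hQpow l]
    have hax : (q ^ a) ^ x = Q := by rw [hQ, ← pow_mul]
    rw [hax, div_pow]
    have hpow : (1 - q ^ a) ^ n = (1 - q ^ a) ^ (n - l) * (1 - q ^ a) ^ l := by
      rw [← pow_add, Nat.sub_add_cancel hln]
    rw [hpow]
    have h1 : (1 - q ^ a) ^ (n - l) ≠ 0 := pow_ne_zero _ hD
    have h2 : (1 - q ^ a) ^ l ≠ 0 := pow_ne_zero _ hD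
    field_simp
  rw [hRHS, binom_transform F Q n, qBpoly]
  congr 1
  apply Finset.sum_congr rfl
  intro l _
  rw [hQpow l]
  simp only [hF]
  ring
end

section
/- For q ∈ ℂ with 0 < |q| < 1 and α ∈ ℕ with α ≥ 1: (i) β̃_{0,q}^{(α)} = 1; (ii) q·β̃_{1,q}^{(α)}(1) - β̃_{1,q}^{(α)} = α/[α]_q; (iii) for every n > 1, q·β̃_{n,q}^{(α)}(1) - β̃_{n,q}^{(α)} = 0. -/
lemma alt_sum_choose (n : ℕ) (hn : 1 ≤ n) :
    ∑ l ∈ Finset.range (n + 1), (-1 : ℂ) ^ l * (n.choose l : ℂ) = 0 := by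
  have h := Int.alternating_sum_range_choose (n := n)
  rw [if_neg (by omega)] at h
  exact_mod_cast h

lemma alt_sum_choose_mul (n : ℕ) (hn : 2 ≤ n) :
    ∑ l ∈ Finset.range (n + 1), (-1 : ℂ) ^ l * (l : ℂ) * (n.choose l : ℂ) = 0 := by
  obtain ⟨m, rfl⟩ : ∃ m, n = m + 1 := ⟨n - 1, by omega⟩
  have key : ∀ k : ℕ, ((k : ℂ) + 1) * (((m + 1).choose (k + 1) : ℕ) : ℂ)
      = ((m : ℂ) + 1) * (m.choose k : ℂ) := by
    intro k
    have h : (m + 1) * m.choose k = (m + 1).choose (k + 1) * (k + 1) := by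
      simpa using Nat.add_one_mul_choose_eq m k
    have h2 := congrArg (Nat.cast (R := ℂ)) h
    push_cast at h2
    linear_combination -h2
  have hsum : ∑ i ∈ Finset.range (m + 1),
      (-1 : ℂ) ^ (i + 1) * ((i : ℂ) + 1) * (((m + 1).choose (i + 1) : ℕ) : ℂ) = 0 := by
    have hc : ∀ i ∈ Finset.range (m + 1),
        (-1 : ℂ) ^ (i + 1) * ((i : ℂ) + 1) * (((m + 1).choose (i + 1) : ℕ) : ℂ)
        = (-((m : ℂ) + 1)) * ((-1 : ℂ) ^ i * (m.choose i : ℂ)) := by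
      intro i _
      rw [pow_succ]
      linear_combination (-(-1 : ℂ) ^ i) * key i
    rw [Finset.sum_congr rfl hc, ← Finset.mul_sum, alt_sum_choose m (by omega), mul_zero]
  rw [Finset.sum_range_succ']
  push_cast
  push_cast at hsum
  simpa using hsum

theorem stmt5 (q : ℂ) (hq0 : 0 < ‖q‖) (hq1 : ‖q‖ < 1)
    (a : ℕ) (ha : 1 ≤ a) :
    qB q a 0 = 1 ∧
    q * qBpoly q a 1 1 - qB q a 1 = (a : ℂ) / qnum q a ∧
    ∀ n : ℕ, 1 < n → q * qBpoly q a n 1 - qB q a n = 0 := by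
  have hne : ∀ k : ℕ, 1 ≤ k → (1 : ℂ) - q ^ k ≠ 0 := by
    intro k hk
    rw [sub_ne_zero]
    intro h
    have : ‖q ^ k‖ < 1 := by
      rw [norm_pow]
      exact pow_lt_one₀ (norm_nonneg q) hq1 (by omega)
    rw [← h] at this
    simp at this
  have hq : (1 : ℂ) - q ≠ 0 := by simpa using hne 1 le_rfl
  have hqa : (1 : ℂ) - q ^ a ≠ 0 := hne a ha
  refine ⟨?_, ?_, ?_⟩
  · simp only [qB, Finset.sum_range_one, Nat.choose_zero_right, Nat.cast_one, pow_zero,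
      Nat.cast_zero, mul_zero, zero_add, Nat.mul_zero, pow_one]
    field_simp
  · have hqa1 : (1 : ℂ) - q ^ (a + 1) ≠ 0 := hne (a + 1) (by omega)
    simp only [qBpoly, qB, Finset.sum_range_succ, Finset.sum_range_zero, qnum]
    simp only [Nat.choose_zero_right, Nat.choose_one_right, Nat.cast_zero, Nat.cast_one,
      Nat.mul_zero, Nat.mul_one, pow_zero, pow_one, mul_zero, zero_add, mul_one, zero_mul]
    field_simp
    ring
  · intro n hn
    have key : ∀ l : ℕ,
        q * ((n.choose l : ℂ) * (-1) ^ l * q ^ (a * l * 1) * ((a : ℂ) * l + 1) / (1 - q ^ (a * l + 1)))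
          - (n.choose l : ℂ) * (-1) ^ l * ((a : ℂ) * l + 1) / (1 - q ^ (a * l + 1))
        = -((n.choose l : ℂ) * (-1) ^ l * ((a : ℂ) * l + 1)) := by
      intro l
      have h := hne (a * l + 1) (by omega)
      rw [mul_one]
      field_simp
      ring
    have sum0 : ∑ l ∈ Finset.range (n + 1),
        (n.choose l : ℂ) * (-1) ^ l * ((a : ℂ) * l + 1) = 0 := by
      have expand : ∀ l : ℕ, (n.choose l : ℂ) * (-1) ^ l * ((a : ℂ) * l + 1)
          = (a : ℂ) * ((-1 : ℂ) ^ l * (l : ℂ) * (n.choose l : ℂ))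
            + (-1 : ℂ) ^ l * (n.choose l : ℂ) := by intro l; ring
      simp only [expand]
      rw [Finset.sum_add_distrib, ← Finset.mul_sum,
        alt_sum_choose_mul n (by omega), alt_sum_choose n (by omega)]
      ring
    simp only [qBpoly, qB]
    rw [mul_left_comm, ← mul_sub, Finset.mul_sum, ← Finset.sum_sub_distrib,
      Finset.sum_congr rfl (fun l _ => key l), Finset.sum_neg_distrib, sum0]
    simp
end

section
/- For q ∈ ℂ with 0 < |q| < 1 and α ∈ ℕ with α ≥ 1, the weighted q-Bernoulli numbers satisfy the Carlitz-type recurrence: β̃_{0,q}^{(α)} = 1, and for n ≥ 1, q·∑_{l=0}^n C(n,l) q^{αl} β̃_{l,q}^{(α)} - β̃_{n,q}^{(α)} equals α/[α]_q if n = 1 and equals 0 if n > 1. -/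
lemma binom_aux (n l : ℕ) (hl : l ≤ n) (x : ℂ) :
    ∑ m ∈ Finset.Ico l (n+1), (n.choose m : ℂ) * (m.choose l) * x^m
      = (n.choose l : ℂ) * x^l * (x+1)^(n-l) := by
  rw [Finset.sum_Ico_eq_sum_range]
  have h1 : n + 1 - l = (n - l) + 1 := by omega
  rw [h1, add_pow]
  simp only [Finset.mul_sum]
  refine Finset.sum_congr rfl fun j hj => ?_
  have hj' : j ≤ n - l := by simpa [Nat.lt_succ_iff] using hj
  have hln : l + j ≤ n := by omega
  have hc : (n.choose (l+j) : ℂ) * ((l+j).choose l) = (n.choose l : ℂ) * ((n-l).choose j) := by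
    have h := Nat.choose_mul (n := n) (Nat.le_add_right l j)
    have h2 : l + j - l = j := by omega
    rw [h2] at h
    exact_mod_cast congrArg (Nat.cast (R := ℂ)) h
  rw [hc, pow_add]
  ring

lemma alt_sum_choose_s6 (m : ℕ) :
    ∑ i ∈ Finset.range (m+1), (-1:ℂ)^i * (m.choose i) = if m = 0 then 1 else 0 := by
  rcases eq_or_ne m 0 with rfl | hm
  · simp
  · have h := Int.alternating_sum_range_choose_of_ne hm
    have h2 := congrArg (fun z : ℤ => (z : ℂ)) h
    push_cast at h2
    rw [if_neg hm]
    exact h2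

lemma alt_sum (n : ℕ) (hn : 1 ≤ n) (a : ℕ) :
    ∑ l ∈ Finset.range (n+1), (n.choose l : ℂ) * (-1)^l * ((a:ℂ)*l + 1)
     = if n = 1 then -(a:ℂ) else 0 := by
  obtain ⟨m, rfl⟩ : ∃ m, n = m + 1 := ⟨n - 1, by omega⟩
  have h1 : ∑ l ∈ Finset.range (m+2), ((m+1).choose l : ℂ) * (-1)^l = 0 := by
    have h := alt_sum_choose_s6 (m+1)
    rw [if_neg (by omega)] at h
    rw [← h]
    exact Finset.sum_congr rfl fun i _ => by ring
  have h2 : ∑ l ∈ Finset.range (m+2), ((m+1).choose l : ℂ) * (-1)^l * l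
      = if m = 0 then -1 else 0 := by
    rw [Finset.sum_range_succ']
    simp only [Nat.cast_zero, mul_zero, zero_add, add_zero, Nat.cast_add, Nat.cast_one]
    have key : ∀ k, ((m+1).choose (k+1) : ℂ) * (-1)^(k+1) * ((k:ℂ)+1)
        = -(((m:ℂ)+1) * ((-1)^k * (m.choose k))) := by
      intro k
      have h := Nat.add_one_mul_choose_eq m k
      have h3 : ((m:ℂ)+1) * (m.choose k : ℂ) = ((m+1).choose (k+1) : ℂ) * ((k:ℂ)+1) := by
        exact_mod_cast congrArg (Nat.cast (R := ℂ)) h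
      linear_combination (-1:ℂ)^k * h3
    calc ∑ k ∈ Finset.range (m+1), ((m+1).choose (k+1) : ℂ) * (-1)^(k+1) * ((k:ℂ)+1)
        = ∑ k ∈ Finset.range (m+1), -(((m:ℂ)+1) * ((-1)^k * (m.choose k))) :=
          Finset.sum_congr rfl fun k _ => key k
      _ = -(((m:ℂ)+1) * ∑ k ∈ Finset.range (m+1), (-1:ℂ)^k * (m.choose k)) := by
          simp [Finset.mul_sum]
      _ = if m = 0 then -1 else 0 := by
          rw [alt_sum_choose_s6]
          rcases eq_or_ne m 0 with rfl | hm
          · simp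
          · simp [hm]
  have expand : ∀ l, ((m+1).choose l : ℂ) * (-1)^l * ((a:ℂ)*l + 1)
      = (a:ℂ) * (((m+1).choose l : ℂ) * (-1)^l * l) + ((m+1).choose l : ℂ) * (-1)^l := by
    intro l; ring
  rw [Finset.sum_congr rfl fun l _ => expand l, Finset.sum_add_distrib, ← Finset.mul_sum, h1, h2]
  rcases eq_or_ne m 0 with rfl | hm
  · simp
  · simp [hm]

theorem stmt6 (q : ℂ) (hq0 : 0 < ‖q‖) (hq1 : ‖q‖ < 1)
    (a : ℕ) (ha : 1 ≤ a) :
    qB q a 0 = 1 ∧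
    ∀ n : ℕ, 1 ≤ n →
      q * (∑ l ∈ Finset.range (n + 1), (n.choose l : ℂ) * q ^ (a * l) * qB q a l) - qB q a n =
        if n = 1 then (a : ℂ) / qnum q a else 0 := by
  have hpow : ∀ k : ℕ, 1 ≤ k → (1:ℂ) - q ^ k ≠ 0 := by
    intro k hk h
    have h1 : q ^ k = 1 := by linear_combination -h
    have h2 : ‖q ^ k‖ < 1 := by
      rw [norm_pow]
      exact pow_lt_one₀ (norm_nonneg q) hq1 (by omega)
    rw [h1] at h2
    simp at h2
  have hq : (1:ℂ) - q ≠ 0 := by simpa using hpow 1 le_rfl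
  have hc : (1:ℂ) - q ^ a ≠ 0 := hpow a ha
  have hD : ∀ l : ℕ, (1:ℂ) - q ^ (a * l + 1) ≠ 0 := fun l => hpow _ (by omega)
  set u : ℂ := ((1:ℂ) - q ^ a)⁻¹ with hu
  have hcu : ((1:ℂ) - q ^ a) * u = 1 := mul_inv_cancel₀ hc
  set T : ℕ → ℂ := fun l => ((a : ℂ) * l + 1) / (1 - q ^ (a * l + 1)) with hT
  set x : ℂ := q ^ a * u with hx
  have hx1 : x + 1 = u := by
    have : x + 1 = q ^ a * u + ((1:ℂ) - q ^ a) * u := by rw [hcu]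
    rw [this]; ring
  have hqB : ∀ m : ℕ, qB q a m
      = (1 - q) * u ^ m * ∑ l ∈ Finset.range (m + 1),
          (m.choose l : ℂ) * (-1) ^ l * T l := by
    intro m
    rw [qB, hu, inv_pow, div_eq_mul_inv]
    congr 1
    exact Finset.sum_congr rfl fun l _ => by rw [hT]; rw [mul_div_assoc]
  constructor
  · rw [hqB]
    simp only [pow_zero, mul_one, Finset.sum_range_succ, Finset.sum_range_zero,
      Nat.choose_self, Nat.cast_one, one_mul, zero_add, hT]
    simp only [Nat.mul_zero, Nat.cast_zero, mul_zero, zero_add, pow_one]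
    field_simp
  · intro n hn
    have hkey : q * (∑ m ∈ Finset.range (n + 1), (n.choose m : ℂ) * q ^ (a * m) * qB q a m)
        = (1 - q) * u ^ n * ∑ l ∈ Finset.range (n + 1),
            (n.choose l : ℂ) * (-1) ^ l * (q ^ (a * l + 1)) * T l := by
      have step1 : ∀ m : ℕ, q * ((n.choose m : ℂ) * q ^ (a * m) * qB q a m)
          = ∑ l ∈ Finset.range (m + 1),
              ((n.choose m : ℂ) * (m.choose l : ℂ) * x ^ m) * (q * (1 - q) * (-1) ^ l * T l) := by
        intro m
        rw [hqB m]
        simp only [Finset.mul_sum]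
        refine Finset.sum_congr rfl fun l _ => ?_
        have hxm : x ^ m = q ^ (a * m) * u ^ m := by
          rw [hx, mul_pow, ← pow_mul]
        rw [hxm]; ring
      rw [Finset.mul_sum]
      rw [Finset.sum_congr rfl fun m _ => step1 m]
      have swap := Finset.sum_Ico_Ico_comm 0 (n + 1)
        (fun l m => ((n.choose m : ℂ) * (m.choose l : ℂ) * x ^ m) * (q * (1 - q) * (-1) ^ l * T l))
      simp only [← Finset.range_eq_Ico] at swap
      have swap2 : (∑ m ∈ Finset.range (n + 1), ∑ l ∈ Finset.range (m + 1),
            ((n.choose m : ℂ) * (m.choose l : ℂ) * x ^ m) * (q * (1 - q) * (-1) ^ l * T l))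
          = ∑ l ∈ Finset.range (n + 1), ∑ m ∈ Finset.Ico l (n + 1),
            ((n.choose m : ℂ) * (m.choose l : ℂ) * x ^ m) * (q * (1 - q) * (-1) ^ l * T l) := by
        rw [← swap]
      rw [swap2, Finset.mul_sum]
      refine Finset.sum_congr rfl fun l hl => ?_
      have hln : l ≤ n := by
        simpa [Nat.lt_succ_iff] using Finset.mem_range.mp hl
      have inner : ∑ m ∈ Finset.Ico l (n + 1),
            ((n.choose m : ℂ) * (m.choose l : ℂ) * x ^ m) * (q * (1 - q) * (-1) ^ l * T l)
          = ((n.choose l : ℂ) * x ^ l * (x + 1) ^ (n - l)) * (q * (1 - q) * (-1) ^ l * T l) := by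
        rw [← Finset.sum_mul, binom_aux n l hln x]
      rw [inner, hx1]
      have hxl : x ^ l = q ^ (a * l) * u ^ l := by rw [hx, mul_pow, ← pow_mul]
      have hun : u ^ l * u ^ (n - l) = u ^ n := by
        rw [← pow_add]
        congr 1
        omega
      have hql : q * q ^ (a * l) = q ^ (a * l + 1) := by rw [pow_succ]; ring
      rw [hxl]
      calc (n.choose l : ℂ) * (q ^ (a * l) * u ^ l) * u ^ (n - l) * (q * (1 - q) * (-1) ^ l * T l)
          = (1 - q) * (u ^ l * u ^ (n - l)) * ((n.choose l : ℂ) * (-1) ^ l * (q * q ^ (a * l)) * T l) := by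
            ring
        _ = (1 - q) * u ^ n * ((n.choose l : ℂ) * (-1) ^ l * q ^ (a * l + 1) * T l) := by
            rw [hun, hql]
    rw [hkey, hqB n]
    have combine : (1 - q) * u ^ n * (∑ l ∈ Finset.range (n + 1),
          (n.choose l : ℂ) * (-1) ^ l * (q ^ (a * l + 1)) * T l)
        - (1 - q) * u ^ n * (∑ l ∈ Finset.range (n + 1), (n.choose l : ℂ) * (-1) ^ l * T l)
        = (1 - q) * u ^ n * ∑ l ∈ Finset.range (n + 1),
            (n.choose l : ℂ) * (-1) ^ l * ((q ^ (a * l + 1) - 1) * T l) := by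
      rw [← mul_sub, ← Finset.sum_sub_distrib]
      congr 1
      exact Finset.sum_congr rfl fun l _ => by ring
    rw [combine]
    have hTl : ∀ l : ℕ, (q ^ (a * l + 1) - 1) * T l = -((a : ℂ) * l + 1) := by
      intro l
      rw [hT]
      have := hD l
      field_simp
      ring
    have : ∑ l ∈ Finset.range (n + 1), (n.choose l : ℂ) * (-1) ^ l * ((q ^ (a * l + 1) - 1) * T l)
        = -(if n = 1 then -(a : ℂ) else 0) := by
      rw [← alt_sum n hn a, ← Finset.sum_neg_distrib]
      exact Finset.sum_congr rfl fun l _ => by rw [hTl l]; ring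
    rw [this]
    rcases eq_or_ne n 1 with rfl | hn1
    · rw [if_pos rfl, if_pos rfl, qnum]
      rw [pow_one]
      rw [hu]
      field_simp
    · rw [if_neg hn1, if_neg hn1]
      simp
end

section
/- For q ∈ ℂ with 0 < |q| < 1, n ∈ ℕ, α ∈ ℕ with α ≥ 1, and x ∈ ℤ, the reflection formula holds: β̃_{n,q^{-1}}^{(α)}(1-x) = (-1)^n q^{αn} β̃_{n,q}^{(α)}(x), where β̃_{n,Q}^{(α)}(y) = (1-Q)/(1-Q^α)^n ∑_{l=0}^n C(n,l)(-1)^l Q^{αly} (αl+1)/(1-Q^{αl+1}) (note q^{-1} has modulus greater than 1, but the finite-sum definition still makes sense). -/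
noncomputable def qnumZ (Q : ℂ) (y : ℤ) : ℂ := (1 - Q ^ y) / (1 - Q)

/-- Weighted q-Bernoulli polynomial with integer argument `y`. -/
noncomputable def qBZ (Q : ℂ) (a n : ℕ) (y : ℤ) : ℂ :=
  (1 - Q) / (1 - Q ^ a) ^ n *
    ∑ l ∈ Finset.range (n + 1),
      (n.choose l : ℂ) * (-1) ^ l * Q ^ ((a : ℤ) * l * y) * ((a : ℂ) * l + 1) /
        (1 - Q ^ (a * l + 1))

theorem stmt8 (q : ℂ) (hq0 : 0 < ‖q‖) (hq1 : ‖q‖ < 1)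
    (n a : ℕ) (ha : 1 ≤ a) (x : ℤ) :
    qBZ q⁻¹ a n (1 - x) = (-1) ^ n * q ^ (a * n) * qBZ q a n x := by
  have hq : q ≠ 0 := by
    intro h; simp [h] at hq0
  have hpow : ∀ k : ℕ, 1 ≤ k → 1 - q ^ k ≠ 0 := by
    intro k hk h
    have hqk : q ^ k = 1 := by linear_combination -h
    have : ‖q ^ k‖ < 1 :=
      by rw [norm_pow]; exact pow_lt_one₀ (norm_nonneg q) hq1 (by omega)
    rw [hqk] at this; simp at this
  have hpowi : ∀ k : ℕ, 1 ≤ k → 1 - q⁻¹ ^ k ≠ 0 := by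
    intro k hk h
    have hqk : q⁻¹ ^ k = 1 := by linear_combination -h
    rw [inv_pow, inv_eq_one] at hqk
    exact hpow k hk (by rw [hqk]; ring)
  simp only [qBZ, Finset.mul_sum]
  refine Finset.sum_congr rfl fun l hl => ?_
  rw [inv_zpow', inv_pow, inv_pow]
  have h1 : -((a : ℤ) * l * (1 - x)) = (a : ℤ) * l * x + (-((a*l : ℕ) : ℤ)) := by
    push_cast; ring
  rw [h1, zpow_add₀ hq, zpow_neg, zpow_natCast]
  have hx : q ^ ((a : ℤ) * l * x) ≠ 0 := zpow_ne_zero _ hq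
  have ha1 : (1 : ℂ) - (q ^ a)⁻¹ ≠ 0 := by rw [← inv_pow]; exact hpowi a ha
  have hal1 : (1 : ℂ) - (q ^ (a*l+1))⁻¹ ≠ 0 := by rw [← inv_pow]; exact hpowi _ (by omega)
  have e0 : (1 : ℂ) - q⁻¹ = -(1 - q) / q := by field_simp; ring
  have e1 : (1 : ℂ) - (q ^ a)⁻¹ = -(1 - q ^ a) / q ^ a := by
    field_simp
    ring
  have e2 : (1 : ℂ) - (q ^ (a*l+1))⁻¹ = -(1 - q ^ (a*l+1)) / q ^ (a*l+1) := by
    field_simp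
    ring
  have e3 : (-(1 - q ^ a) / q ^ a) ^ n = ((-1) ^ n * (1 - q ^ a) ^ n) / q ^ (a*n) := by
    rw [div_pow, neg_pow, pow_mul]
  rw [e0, e1, e2, e3]
  have hm : ((-1 : ℂ)) ^ n ≠ 0 := pow_ne_zero _ (by norm_num)
  have hA : (1 : ℂ) - q ^ a ≠ 0 := hpow a ha
  have hB : (1 : ℂ) - q ^ (a*l+1) ≠ 0 := hpow _ (by omega)
  have hA' : (-1 : ℂ) + q ^ a ≠ 0 := by intro h; exact hA (by linear_combination -h)
  have hB' : (-1 : ℂ) + q ^ (a*l+1) ≠ 0 := by intro h; exact hB (by linear_combination -h)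
  rw [div_div_eq_mul_div, div_div_eq_mul_div, div_mul_div_comm, div_mul_div_comm,
    mul_div_assoc']
  rw [div_eq_div_iff (mul_ne_zero (mul_ne_zero hm (pow_ne_zero _ hA)) (neg_ne_zero.mpr hB))
    (mul_ne_zero (pow_ne_zero _ hA) hB)]
  field_simp
  have hsq : ((-1 : ℂ)) ^ (n * 2) = 1 := by rw [mul_comm, pow_mul]; norm_num
  ring_nf
  simp only [hsq, one_mul, mul_one]
  ring
end

section
/- For q ∈ ℂ with q ≠ 0 and q not a root of unity, α ∈ ℕ with α ≥ 1, and n ∈ ℕ, the following three quantities are equal: ∑_{l=0}^n C(n,l)(-1)^l β̃_{l,q}^{(α)}, (-1)^n q^{αn} β̃_{n,q}^{(α)}(-1), and β̃_{n,q^{-1}}^{(α)}(2). -/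
open Finset

lemma qbz_inner_sum (u : ℂ) (n j : ℕ) (hj : j ≤ n) :
    ∑ l ∈ range (n+1), (n.choose l : ℂ) * (l.choose j : ℂ) * (-u)^l
      = (n.choose j : ℂ) * (-u)^j * (1-u)^(n-j) := by
  have h1 : n + 1 = j + (n - j + 1) := by omega
  rw [h1, Finset.sum_range_add]
  have hz : ∀ l ∈ range j, (n.choose l : ℂ) * (l.choose j : ℂ) * (-u)^l = 0 := by
    intro l hl
    rw [Nat.choose_eq_zero_of_lt (mem_range.mp hl)]
    simp
  rw [Finset.sum_congr rfl hz, Finset.sum_const_zero, zero_add]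
  have hc : ∀ m ∈ range (n - j + 1),
      (n.choose (j+m) : ℂ) * ((j+m).choose j : ℂ) * (-u)^(j+m)
        = ((n.choose j : ℂ) * (-u)^j) * (((n-j).choose m : ℂ) * (-u)^m) := by
    intro m hm
    have hm' : m ≤ n - j := by have := mem_range.mp hm; omega
    have h2 : n.choose (j+m) * (j+m).choose j = n.choose j * (n-j).choose m := by
      have := Nat.choose_mul (n := n) (k := j + m) (s := j) (by omega)
      simpa using this
    have h2' : (n.choose (j+m) : ℂ) * ((j+m).choose j : ℂ)
        = (n.choose j : ℂ) * ((n-j).choose m : ℂ) := by exact_mod_cast congrArg (Nat.cast : ℕ → ℂ) h2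
    rw [pow_add]
    linear_combination ((-u)^j * (-u)^m) * h2'
  rw [Finset.sum_congr rfl hc, ← Finset.mul_sum]
  congr 1
  have hb := add_pow (-u) 1 (n - j)
  rw [show (1:ℂ) - u = -u + 1 by ring, hb]
  exact Finset.sum_congr rfl (fun m _ => by simp; ring)

lemma qbz_key (u : ℂ) (c : ℕ → ℂ) (n : ℕ) :
    ∑ l ∈ range (n+1), ((n.choose l : ℂ) * (-u)^l *
        ∑ j ∈ range (l+1), (l.choose j : ℂ) * (-1)^j * c j)
      = ∑ j ∈ range (n+1), (n.choose j : ℂ) * u^j * (1-u)^(n-j) * c j := by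
  have step1 : ∀ l ∈ range (n+1),
      (n.choose l : ℂ) * (-u)^l * ∑ j ∈ range (l+1), (l.choose j : ℂ) * (-1)^j * c j
        = ∑ j ∈ range (n+1), (n.choose l : ℂ) * (l.choose j : ℂ) * (-u)^l * ((-1)^j * c j) := by
    intro l hl
    have hsub : range (l+1) ⊆ range (n+1) :=
      Finset.range_subset_range.mpr (by have := mem_range.mp hl; omega)
    rw [Finset.mul_sum]
    rw [Finset.sum_subset hsub
      (fun x hx hxs => by
        have hlx : l < x := by
          simp only [mem_range] at hx hxs; omega
        rw [Nat.choose_eq_zero_of_lt hlx]; simp)]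
    exact Finset.sum_congr rfl fun j _ => by ring
  rw [Finset.sum_congr rfl step1, Finset.sum_comm]
  refine Finset.sum_congr rfl fun j hj => ?_
  have hjn : j ≤ n := by have := mem_range.mp hj; omega
  have hsplit : ∑ l ∈ range (n+1), (n.choose l:ℂ)*(l.choose j:ℂ)*(-u)^l*((-1)^j * c j)
       = (∑ l ∈ range (n+1), (n.choose l:ℂ)*(l.choose j:ℂ)*(-u)^l) * ((-1)^j * c j) := by
    rw [Finset.sum_mul]
  rw [hsplit, qbz_inner_sum u n j hjn]
  rcases Nat.even_or_odd j with h | h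
  · rw [h.neg_pow, h.neg_one_pow]; ring
  · rw [h.neg_pow, h.neg_one_pow]; ring

set_option maxHeartbeats 1000000 in
lemma qbz_aux2 (q X Y C M : ℂ) (hq : q ≠ 0) (hX : X ≠ 0) (hY : Y ≠ 0)
    (hX1 : (1:ℂ) - X ≠ 0) (hD : (1:ℂ) - Y * q ≠ 0) (n l : ℕ) :
    (-1:ℂ)^n * X^n * ((1-q)/(1-X)^n * (C * (-1)^l * Y⁻¹ * M / (1 - Y*q)))
    = (1-q⁻¹)/(1-X⁻¹)^n * (C * (-1)^l * (Y^2)⁻¹ * M / (1 - (Y*q)⁻¹)) := by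
  have h1 : (1:ℂ) - X⁻¹ = -X⁻¹ * (1 - X) := by field_simp; ring
  have h2 : (1:ℂ) - (Y*q)⁻¹ = -(Y*q)⁻¹ * (1 - Y*q) := by
    rw [neg_mul, mul_sub, mul_one, inv_mul_cancel₀ (mul_ne_zero hY hq)]
    ring
  have hXn : ((1:ℂ)-X)^n ≠ 0 := pow_ne_zero _ hX1
  have hD' : Y * q - 1 ≠ 0 := fun h => hD (by rw [show (1:ℂ) - Y*q = -(Y*q-1) by ring, h]; ring)
  have hden : q * (1-X)^n * (Y^2 * (Y*q-1)) ≠ 0 :=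
    mul_ne_zero (mul_ne_zero hq hXn) (mul_ne_zero (pow_ne_zero 2 hY) hD')
  rw [h1, h2, mul_pow, neg_pow (X⁻¹) n]
  rcases Nat.even_or_odd n with h | h <;>
    rcases Nat.even_or_odd l with h' | h' <;>
    simp only [h.neg_one_pow, h'.neg_one_pow, inv_pow] <;>
    field_simp <;>
    ring

set_option maxHeartbeats 1000000 in
lemma qbz_aux1 (q X Y C D M : ℂ) (hq : q ≠ 0) (hX : X ≠ 0) (hY : Y ≠ 0)
    (hX1 : (1:ℂ) - X ≠ 0) (hD : D ≠ 0) (j m : ℕ) :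
    C * ((1-X)⁻¹)^j * (-X * (1-X)⁻¹)^m * ((1-q) * M / D)
    = (-1)^j * (-1)^m * (Y * X^m) *
        ((1-q) / ((1-X)^j * (1-X)^m) * (C * (-1)^j * Y⁻¹ * M / D)) := by
  have hXn : ∀ k : ℕ, ((1:ℂ)-X)^k ≠ 0 := fun k => pow_ne_zero _ hX1
  rw [mul_pow, neg_pow X m]
  rcases Nat.even_or_odd j with h | h <;>
    rcases Nat.even_or_odd m with h' | h' <;>
    simp only [h.neg_one_pow, h'.neg_one_pow, inv_pow] <;>
    field_simp <;>
    ring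

theorem stmt9 (q : ℂ) (hq0 : q ≠ 0) (hq1 : ∀ k : ℕ, 0 < k → q ^ k ≠ 1)
    (a : ℕ) (ha : 1 ≤ a) (n : ℕ) :
    (∑ l ∈ Finset.range (n + 1), (n.choose l : ℂ) * (-1) ^ l * qBZ q a l 0) =
        (-1) ^ n * q ^ (a * n) * qBZ q a n (-1) ∧
      (-1) ^ n * q ^ (a * n) * qBZ q a n (-1) = qBZ q⁻¹ a n 2 := by
  have hA : (1 : ℂ) - q ^ a ≠ 0 := sub_ne_zero_of_ne (Ne.symm (hq1 a ha))
  have hD : ∀ j : ℕ, (1 : ℂ) - q ^ (a * j + 1) ≠ 0 :=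
    fun j => sub_ne_zero_of_ne (Ne.symm (hq1 _ (by omega)))
  have hqp : ∀ k : ℕ, q ^ k ≠ 0 := fun k => pow_ne_zero k hq0
  -- zpow conversions
  have zc1 : ∀ l : ℕ, q ^ ((a : ℤ) * l * (-1)) = (q ^ (a * l))⁻¹ := by
    intro l
    rw [show (a : ℤ) * l * (-1) = -((a * l : ℕ) : ℤ) by push_cast; ring, zpow_neg, zpow_natCast]
  have zc2 : ∀ l : ℕ, (q⁻¹) ^ ((a : ℤ) * l * 2) = (q ^ (a * l * 2))⁻¹ := by
    intro l
    rw [show (a : ℤ) * l * 2 = ((a * l * 2 : ℕ) : ℤ) by push_cast; ring, zpow_natCast, inv_pow]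
  constructor
  · -- Part 1
    have stepA : (∑ l ∈ Finset.range (n + 1), (n.choose l : ℂ) * (-1) ^ l * qBZ q a l 0)
        = ∑ l ∈ range (n+1), ((n.choose l : ℂ) * (-(1 - q^a)⁻¹)^l *
            ∑ j ∈ range (l+1), (l.choose j : ℂ) * (-1)^j *
              ((1 - q) * ((a:ℂ)*j+1) / (1 - q ^ (a*j+1)))) := by
      refine Finset.sum_congr rfl fun l _ => ?_
      unfold qBZ
      simp only [mul_zero, zpow_zero, mul_one]
      simp only [Finset.mul_sum]
      refine Finset.sum_congr rfl fun i _ => ?_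
      rw [neg_pow ((1 - q^a)⁻¹) l, inv_pow]
      ring
    rw [stepA]
    refine (qbz_key ((1 - q^a)⁻¹)
      (fun j => (1 - q) * ((a:ℂ)*j+1) / (1 - q ^ (a*j+1))) n).trans ?_
    unfold qBZ
    simp only [Finset.mul_sum]
    refine Finset.sum_congr rfl fun j hj => ?_
    have hjn : j ≤ n := by have := mem_range.mp hj; omega
    rw [zc1 j]
    obtain ⟨m, rfl⟩ : ∃ m, n = j + m := ⟨n - j, by omega⟩
    rw [Nat.add_sub_cancel_left]
    have h1u : (1:ℂ) - (1-q^a)⁻¹ = -q^a * (1-q^a)⁻¹ := by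
      field_simp; ring
    rw [h1u]
    rw [show a*(j+m) = a*j + a*m by ring, pow_add q (a*j) (a*m), pow_mul q a m,
      pow_add (-1:ℂ) j m, pow_add (1-q^a) j m]
    exact qbz_aux1 q (q^a) (q^(a*j)) ((j+m).choose j : ℂ) (1 - q^(a*j+1)) ((a:ℂ)*j+1)
      hq0 (hqp a) (hqp (a*j)) hA (hD j) j m
  · -- Part 2
    unfold qBZ
    simp only [Finset.mul_sum]
    refine Finset.sum_congr rfl fun l _ => ?_
    rw [zc1 l, zc2 l, inv_pow q a, inv_pow q (a*l+1), pow_mul q a n,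
      pow_mul q (a*l) 2, pow_succ q (a*l)]
    exact qbz_aux2 q (q^a) (q^(a*l)) (n.choose l : ℂ) ((a:ℂ)*l+1)
      hq0 (hqp a) (hqp (a*l)) hA (by rw [← pow_succ]; exact hD l) n l
end

section
/- For q ∈ ℂ with 0 < |q| < 1, α ∈ ℕ with α ≥ 1, and n ∈ ℕ with n > 1: q^2 β̃_{n,q}^{(α)}(2) = n q^{1+α} (α/[α]_q) + q^2 - q + β̃_{n,q}^{(α)}. -/
lemma sum_choose_pow (m : ℕ) (t : ℂ) :
    ∑ l ∈ Finset.range (m+1), (m.choose l : ℂ) * t ^ l = (1 + t) ^ m := by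
  rw [add_comm 1 t, add_pow]
  simp [mul_comm]

lemma sum_choose_mul (m : ℕ) (t : ℂ) :
    ∑ l ∈ Finset.range (m+2), ((m+1).choose l : ℂ) * l * t ^ l
      = ((m:ℂ)+1) * t * (1+t) ^ m := by
  rw [Finset.sum_range_succ']
  simp only [Nat.cast_zero, mul_zero, zero_mul, add_zero]
  have h : ∀ j ∈ Finset.range (m+1), ((m+1).choose (j+1) : ℂ) * ((j:ℂ)+1) * t^(j+1)
      = ((m:ℂ)+1) * t * ((m.choose j : ℂ) * t^j) := by
    intro j _
    have h0 := Nat.add_one_mul_choose_eq m j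
    have hc : ((m:ℂ)+1) * (m.choose j) = ((m+1).choose (j+1) : ℂ) * ((j:ℂ)+1) := by
      exact_mod_cast congrArg (Nat.cast : ℕ → ℂ) h0
    rw [pow_succ]
    linear_combination (t^j * t) * hc.symm
  calc ∑ j ∈ Finset.range (m+1), ((m+1).choose (j+1) : ℂ) * (↑(j+1)) * t^(j+1)
      = ∑ j ∈ Finset.range (m+1), ((m:ℂ)+1) * t * ((m.choose j : ℂ) * t^j) := by
        refine Finset.sum_congr rfl fun j hj => ?_
        push_cast
        exact h j hj
    _ = ((m:ℂ)+1) * t * (1+t)^m := by rw [← Finset.mul_sum, sum_choose_pow]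

lemma S_gen (m a : ℕ) (t : ℂ) :
    ∑ l ∈ Finset.range (m+2+1), ((m+2).choose l : ℂ) * (-1)^l * ((a:ℂ)*l+1) * t^l
      = (1-t)^(m+2) - (a:ℂ)*((m:ℂ)+2)*t*(1-t)^(m+1) := by
  have h1 := sum_choose_pow (m+2) (-t)
  have h2 := sum_choose_mul (m+1) (-t)
  have hterm : ∀ l ∈ Finset.range (m+2+1),
      ((m+2).choose l : ℂ) * (-1)^l * ((a:ℂ)*l+1) * t^l
        = (a:ℂ)*(((m+2).choose l : ℂ) * l * (-t)^l) + ((m+2).choose l : ℂ) * (-t)^l := by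
    intro l _
    rw [neg_pow]
    ring
  rw [Finset.sum_congr rfl hterm, Finset.sum_add_distrib, ← Finset.mul_sum]
  have e1 : (1 : ℂ) + -t = 1 - t := by ring
  rw [e1] at h1 h2
  rw [show m+2+1 = (m+1)+2 from rfl, h2, show (m+1)+2 = (m+2)+1 from rfl, h1]
  push_cast
  ring

theorem stmt10 (q : ℂ) (hq0 : 0 < ‖q‖) (hq1 : ‖q‖ < 1)
    (a n : ℕ) (ha : 1 ≤ a) (hn : 1 < n) :
    q ^ 2 * qBpoly q a n 2 =
      (n : ℂ) * q ^ (1 + a) * ((a : ℂ) / qnum q a) + q ^ 2 - q + qB q a n := by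
  obtain ⟨m, rfl⟩ : ∃ m, n = m + 2 := ⟨n - 2, by omega⟩
  have hne : ∀ k : ℕ, 1 ≤ k → (1:ℂ) - q ^ k ≠ 0 := by
    intro k hk h
    have h1 : q ^ k = 1 := by linear_combination -h
    have : ‖q‖ ^ k < 1 :=
      pow_lt_one₀ (norm_nonneg q) hq1 (by omega)
    rw [← norm_pow, h1] at this
    simp at this
  have hq1' : (1:ℂ) - q ≠ 0 := by simpa using hne 1 le_rfl
  have hqa : (1:ℂ) - q ^ a ≠ 0 := hne a ha
  have key : ∀ l ∈ Finset.range (m+2+1),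
      q^2 * (((m+2).choose l : ℂ) * (-1)^l * q^(a*l*2) * ((a:ℂ)*l+1) / (1 - q^(a*l+1)))
        = ((m+2).choose l : ℂ) * (-1)^l * ((a:ℂ)*l+1) / (1 - q^(a*l+1))
          - (((m+2).choose l : ℂ) * (-1)^l * ((a:ℂ)*l+1)
             + q * (((m+2).choose l : ℂ) * (-1)^l * ((a:ℂ)*l+1) * (q^a)^l)) := by
    intro l _
    have hD : (1:ℂ) - q^(a*l+1) ≠ 0 := hne (a*l+1) (by omega)
    have hp1 : q^(a*l*2) * q^2 = (q^(a*l+1))^2 := by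
      rw [← pow_mul, ← pow_add]
      ring_nf
    have hp2 : q * (q^a)^l = q^(a*l+1) := by
      rw [← pow_mul, pow_succ]
      ring
    field_simp
    linear_combination (((m+2).choose l : ℂ) * (-1)^l * ((a:ℂ)*l+1)) * hp1
      + (((m+2).choose l : ℂ) * (-1)^l * ((a:ℂ)*l+1) * (1 - q^(a*l+1)) * (1 + q^(a*l+1))) * hp2
  have e0 : ∑ l ∈ Finset.range (m+2+1), ((m+2).choose l : ℂ) * (-1)^l * ((a:ℂ)*l+1) = 0 := by
    have := S_gen m a 1
    simpa using this
  have e1 := S_gen m a (q^a)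
  unfold qBpoly qB qnum
  rw [← mul_assoc, mul_comm (q^2) ((1 - q) / (1 - q ^ a) ^ (m+2)), mul_assoc,
    Finset.mul_sum, Finset.sum_congr rfl key, Finset.sum_sub_distrib,
    Finset.sum_add_distrib, ← Finset.mul_sum, e0, e1]
  have hP : (1 - q^a)^(m+2) = (1-q^a)^(m+1) * (1-q^a) := pow_succ _ _
  have hPne : (1-q^a)^(m+1) ≠ 0 := pow_ne_zero _ hqa
  rw [hP, show q^(1+a) = q * q^a from by rw [pow_add, pow_one]]
  push_cast
  field_simp
  ring
end

section
/- For q ∈ ℂ with 0 < |q| < 1 and n ∈ ℕ with n ≥ 1, the weight-1 q-Bernoulli number β̃_{n,q}^{(1)} = (1-q)/(1-q)^n ∑_{l=0}^n C(n,l)(-1)^l (l+1)/(1-q^{l+1}) satisfies the Carlitz recurrence: β̃_{0,q}^{(1)} = 1 and q·∑_{l=0}^n C(n,l) q^l β̃_{l,q}^{(1)} - β̃_{n,q}^{(1)} equals 1 if n = 1 and 0 if n > 1; i.e., the weight-1 numbers coincide with Carlitz's q-Bernoulli numbers β_{n,q}. -/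
lemma carlitz_alt_sum (m : ℕ) :
    ∑ k ∈ Finset.range (m+1), (m.choose k : ℂ) * (-1)^k = if m = 0 then 1 else 0 := by
  have h := add_pow (-1 : ℂ) 1 m
  simp only [neg_add_cancel, one_pow, mul_one] at h
  have hcomm : ∑ k ∈ Finset.range (m+1), (m.choose k : ℂ) * (-1)^k
      = ∑ k ∈ Finset.range (m+1), (-1:ℂ)^k * (m.choose k : ℂ) :=
    Finset.sum_congr rfl (fun k _ => mul_comm _ _)
  rcases Nat.eq_zero_or_pos m with hm | hm
  · subst hm; simp
  · rw [if_neg (by omega), hcomm]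
    rw [zero_pow (by omega)] at h
    exact h.symm

lemma carlitz_inner_sum (q : ℂ) (n j : ℕ) (hj : j ≤ n) :
    ∑ l ∈ Finset.range (n+1), (n.choose l : ℂ) * (l.choose j : ℂ) * (q^l * (1-q)^(n-l))
      = (n.choose j : ℂ) * q^j := by
  have h1 : ∑ l ∈ Finset.range (n+1), (n.choose l : ℂ) * (l.choose j : ℂ) * (q^l * (1-q)^(n-l))
      = ∑ l ∈ Finset.Ico j (n+1), (n.choose l : ℂ) * (l.choose j : ℂ) * (q^l * (1-q)^(n-l)) := by
    rw [Finset.range_eq_Ico]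
    refine (Finset.sum_subset (Finset.Ico_subset_Ico (Nat.zero_le _) le_rfl) ?_).symm
    intro l hl hl'
    simp only [Finset.mem_Ico] at hl hl'
    rw [Nat.choose_eq_zero_of_lt (show l < j by omega)]
    simp
  rw [h1, Finset.sum_Ico_eq_sum_range]
  rw [show n + 1 - j = (n - j) + 1 by omega]
  have h2 : ∀ k ∈ Finset.range ((n-j)+1),
      (n.choose (j+k) : ℂ) * ((j+k).choose j : ℂ) * (q^(j+k) * (1-q)^(n-(j+k)))
      = ((n.choose j : ℂ) * q^j) * (q^k * (1-q)^((n-j)-k) * ((n-j).choose k : ℂ)) := by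
    intro k hk
    simp only [Finset.mem_range] at hk
    have hch : n.choose (j+k) * (j+k).choose j = n.choose j * (n-j).choose k := by
      have := Nat.choose_mul (n := n) (k := j+k) (s := j) (by omega)
      simpa using this
    have hch' : (n.choose (j+k) : ℂ) * ((j+k).choose j : ℂ)
        = (n.choose j : ℂ) * ((n-j).choose k : ℂ) := by
      exact_mod_cast congrArg (Nat.cast : ℕ → ℂ) hch
    rw [hch', pow_add, show n - (j+k) = (n-j) - k by omega]; ring
  rw [Finset.sum_congr rfl h2, ← Finset.mul_sum, ← add_pow]
  norm_num

lemma carlitz_swap_sum (q : ℂ) (A : ℕ → ℂ) (n : ℕ) :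
    ∑ l ∈ Finset.range (n+1), (n.choose l : ℂ) * q^l * (1-q)^(n-l) *
        ∑ j ∈ Finset.range (l+1), (l.choose j : ℂ) * (-1)^j * A j
      = ∑ j ∈ Finset.range (n+1), (n.choose j : ℂ) * (-q)^j * A j := by
  have h1 : ∀ l ∈ Finset.range (n+1),
      (n.choose l : ℂ) * q^l * (1-q)^(n-l) *
        ∑ j ∈ Finset.range (l+1), (l.choose j : ℂ) * (-1)^j * A j
      = ∑ j ∈ Finset.range (n+1),
          (n.choose l : ℂ) * (l.choose j : ℂ) * (q^l * (1-q)^(n-l)) * ((-1)^j * A j) := by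
    intro l hl
    simp only [Finset.mem_range] at hl
    rw [Finset.mul_sum]
    rw [Finset.sum_subset
      (show Finset.range (l+1) ⊆ Finset.range (n+1) from Finset.range_subset_range.mpr (by omega))]
    · apply Finset.sum_congr rfl; intro j _; ring
    · intro j hj hj'
      simp only [Finset.mem_range] at hj hj'
      rw [Nat.choose_eq_zero_of_lt (show l < j by omega)]
      simp
  rw [Finset.sum_congr rfl h1, Finset.sum_comm]
  apply Finset.sum_congr rfl
  intro j hj
  simp only [Finset.mem_range] at hj
  rw [← Finset.sum_mul, carlitz_inner_sum q n j (by omega)]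
  rw [neg_pow]
  ring

lemma carlitz_gsum (n : ℕ) (hn : 1 ≤ n) :
    ∑ j ∈ Finset.range (n+1), (n.choose j : ℂ) * (-1)^j * ((j:ℂ)+1)
      = if n = 1 then (-1) else 0 := by
  have hsplit : ∑ j ∈ Finset.range (n+1), (n.choose j : ℂ) * (-1)^j * ((j:ℂ)+1)
      = (∑ j ∈ Finset.range (n+1), (n.choose j : ℂ) * (-1)^j * (j:ℂ))
        + ∑ j ∈ Finset.range (n+1), (n.choose j : ℂ) * (-1)^j := by
    rw [← Finset.sum_add_distrib]
    apply Finset.sum_congr rfl; intro j _; ring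
  rw [hsplit, carlitz_alt_sum n, if_neg (by omega), add_zero]
  obtain ⟨m, rfl⟩ : ∃ m, n = m + 1 := ⟨n - 1, by omega⟩
  rw [Finset.sum_range_succ' (fun j => ((m+1).choose j : ℂ) * (-1)^j * (j:ℂ))]
  simp only [Nat.cast_zero, mul_zero, add_zero]
  have h2 : ∀ k ∈ Finset.range (m+1),
      ((m+1).choose (k+1) : ℂ) * (-1)^(k+1) * ((k+1 : ℕ):ℂ)
      = (-((m:ℂ)+1)) * ((m.choose k : ℂ) * (-1)^k) := by
    intro k _
    have hc : ((m+1 : ℕ) : ℂ) * (m.choose k : ℂ) = ((m+1).choose (k+1) : ℂ) * ((k+1 : ℕ) : ℂ) := by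
      exact_mod_cast congrArg (Nat.cast : ℕ → ℂ) (Nat.add_one_mul_choose_eq m k)
    push_cast at hc ⊢
    linear_combination ((-1:ℂ))^k * hc
  rw [Finset.sum_congr rfl h2, ← Finset.mul_sum, carlitz_alt_sum m]
  rcases Nat.eq_zero_or_pos m with hm | hm
  · subst hm; norm_num
  · rw [if_neg (by omega), if_neg (by omega)]; ring

lemma qB_one_eq (q : ℂ) (m : ℕ) :
    qB q 1 m = (1-q)/(1-q)^m *
      ∑ j ∈ Finset.range (m+1), (m.choose j : ℂ) * (-1)^j * (((j:ℂ)+1)/(1-q^(j+1))) := by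
  simp [qB, mul_div_assoc]

theorem stmt13 (q : ℂ) (hq0 : 0 < ‖q‖) (hq1 : ‖q‖ < 1)
    (n : ℕ) (hn : 1 ≤ n) :
    qB q 1 0 = 1 ∧
    q * (∑ l ∈ Finset.range (n + 1), (n.choose l : ℂ) * q ^ l * qB q 1 l) - qB q 1 n =
      if n = 1 then 1 else 0 := by
  have hq : q ≠ 1 := by
    intro h; rw [h] at hq1; simp at hq1
  have h1q : (1:ℂ) - q ≠ 0 := sub_ne_zero.mpr (Ne.symm hq)
  have hpow : ∀ m : ℕ, (1:ℂ) - q^(m+1) ≠ 0 := by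
    intro m hzero
    have h1 : q^(m+1) = 1 := by
      have := sub_eq_zero.mp hzero; exact this.symm
    have h2 : ‖q^(m+1)‖ < 1 := by
      rw [norm_pow]; exact pow_lt_one₀ (norm_nonneg _) hq1 (by omega)
    rw [h1] at h2; simp at h2
  set A : ℕ → ℂ := fun j => ((j:ℂ)+1)/(1-q^(j+1)) with hA
  have hs : ∀ m : ℕ, qB q 1 m
      = (1-q)/(1-q)^m * ∑ j ∈ Finset.range (m+1), (m.choose j : ℂ) * (-1)^j * A j := by
    intro m; rw [qB_one_eq]
  constructor
  · rw [qB_one_eq]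
    simp only [pow_zero, div_one, Finset.range_one, Finset.sum_singleton, Nat.choose_self,
      Nat.cast_one, pow_zero, Nat.cast_zero, zero_add, one_mul, mul_one, pow_one]
    field_simp
  · have hterm : ∀ l ∈ Finset.range (n+1),
        (n.choose l : ℂ) * q^l * qB q 1 l
        = (1-q)/(1-q)^n * ((n.choose l:ℂ) * q^l * (1-q)^(n-l) *
            ∑ j ∈ Finset.range (l+1), (l.choose j:ℂ) * (-1)^j * A j) := by
      intro l hl
      simp only [Finset.mem_range] at hl
      rw [hs l]
      have hpoweq : (1-q)^n = (1-q)^l * (1-q)^(n-l) := by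
        rw [← pow_add]; congr 1; omega
      rw [hpoweq]
      have hl1 : (1-q)^l ≠ 0 := pow_ne_zero _ h1q
      have hl2 : (1-q)^(n-l) ≠ 0 := pow_ne_zero _ h1q
      field_simp
    rw [Finset.sum_congr rfl hterm, ← Finset.mul_sum, carlitz_swap_sum q A n, hs n]
    have hsum : q * (∑ j ∈ Finset.range (n+1), (n.choose j : ℂ) * (-q)^j * A j)
        - ∑ j ∈ Finset.range (n+1), (n.choose j : ℂ) * (-1)^j * A j
        = if n = 1 then 1 else 0 := by
      rw [Finset.mul_sum, ← Finset.sum_sub_distrib]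
      have hstep : ∀ j ∈ Finset.range (n+1),
          q * ((n.choose j : ℂ) * (-q)^j * A j) - (n.choose j : ℂ) * (-1)^j * A j
          = -((n.choose j : ℂ) * (-1)^j * ((j:ℂ)+1)) := by
        intro j _
        have hAv : A j * (q^(j+1) - 1) = -((j:ℂ)+1) := by
          rw [hA]
          have := hpow j
          field_simp
          ring
        rw [neg_pow]
        linear_combination ((n.choose j : ℂ) * (-1:ℂ)^j) * hAv
      rw [Finset.sum_congr rfl hstep, Finset.sum_neg_distrib, carlitz_gsum n hn]
      rcases eq_or_ne n 1 with h | h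
      · subst h; norm_num
      · simp [h]
    calc q * ((1-q)/(1-q)^n * ∑ j ∈ Finset.range (n+1), (n.choose j : ℂ) * (-q)^j * A j)
          - (1-q)/(1-q)^n * ∑ j ∈ Finset.range (n+1), (n.choose j : ℂ) * (-1)^j * A j
        = (1-q)/(1-q)^n *
            (q * (∑ j ∈ Finset.range (n+1), (n.choose j : ℂ) * (-q)^j * A j)
              - ∑ j ∈ Finset.range (n+1), (n.choose j : ℂ) * (-1)^j * A j) := by ring
      _ = (1-q)/(1-q)^n * (if n = 1 then 1 else 0) := by rw [hsum]
      _ = if n = 1 then 1 else 0 := by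
          rcases eq_or_ne n 1 with h | h
          · subst h; rw [if_pos rfl, pow_one, div_self h1q, mul_one]
          · simp [h]
end

section
/- For q ∈ ℂ with 0 < |q| < 1, α ∈ ℕ with α ≥ 1, and n ∈ ℕ with n ≥ 1: (1-q)/(1-q^α)^n ∑_{l=0}^n C(n,l)(-1)^l · αl/(1-q^{αl+1}) = -nα(1-q)/(1-q^α)^n ∑_{m=0}^∞ q^{mα+m}(1-q^{mα})^{n-1}, i.e., the Pascal-type identity l·C(n,l) = n·C(n-1,l-1) combined with geometric series summation yields this rearrangement. -/
lemma key_finite (x : ℂ) (n : ℕ) (hn : 1 ≤ n) :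
    ∑ l ∈ Finset.range (n+1), (n.choose l : ℂ) * (-1)^l * l * x^l
      = -(n:ℂ) * x * (1-x)^(n-1) := by
  obtain ⟨m, rfl⟩ := Nat.exists_eq_add_of_le hn
  simp only [Nat.add_sub_cancel_left]
  rw [Finset.sum_range_succ']
  have hb : (1 - x) ^ m = ∑ k ∈ Finset.range (m+1), (-x)^k * 1^(m-k) * (m.choose k) := by
    rw [← add_pow]; ring_nf
  rw [hb, Finset.mul_sum]
  simp only [Nat.cast_zero, mul_zero, zero_mul, pow_zero, mul_one, add_zero, one_pow]
  rw [add_comm 1 m]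
  apply Finset.sum_congr rfl
  intro i _
  have hc : ((m+1).choose (i+1)) * (i+1) = (m+1) * (m.choose i) :=
    (Nat.add_one_mul_choose_eq m i).symm
  have hc' : (((m+1).choose (i+1)) : ℂ) * (i+1) = ((m:ℂ)+1) * (m.choose i) := by
    exact_mod_cast congrArg (Nat.cast : ℕ → ℂ) hc
  rw [neg_pow x]
  push_cast
  linear_combination ((-1:ℂ))^(i+1) * x^(i+1) * hc'

theorem stmt15 (q : ℂ) (hq0 : 0 < ‖q‖) (hq1 : ‖q‖ < 1)
    (a n : ℕ) (ha : 1 ≤ a) (hn : 1 ≤ n) :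
    (1 - q) / (1 - q ^ a) ^ n *
        ∑ l ∈ Finset.range (n + 1),
          (n.choose l : ℂ) * (-1) ^ l * ((a : ℂ) * l) / (1 - q ^ (a * l + 1)) =
      -(n : ℂ) * a * (1 - q) / (1 - q ^ a) ^ n *
        ∑' m : ℕ, q ^ (m * a + m) * (1 - q ^ (m * a)) ^ (n - 1) := by
  have habs : ∀ k : ℕ, k ≠ 0 → ‖q ^ k‖ < 1 := by
    intro k hk
    rw [norm_pow]
    exact pow_lt_one₀ (norm_nonneg q) hq1 hk
  have hsum : ∀ l : ℕ, Summable
      (fun m : ℕ => (n.choose l : ℂ) * (-1)^l * ((a:ℂ)*l) * (q^(a*l+1))^m) :=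
    fun l => (summable_geometric_of_norm_lt_one (habs _ (Nat.succ_ne_zero _))).mul_left _
  have hS : ∑ l ∈ Finset.range (n + 1),
      (n.choose l : ℂ) * (-1) ^ l * ((a : ℂ) * l) / (1 - q ^ (a * l + 1))
      = -(n:ℂ) * (a:ℂ) * ∑' m : ℕ, q ^ (m * a + m) * (1 - q ^ (m * a)) ^ (n - 1) := by
    have h1 : ∀ l ∈ Finset.range (n+1),
        (n.choose l : ℂ) * (-1) ^ l * ((a : ℂ) * l) / (1 - q ^ (a * l + 1))
        = ∑' m : ℕ, (n.choose l : ℂ) * (-1)^l * ((a:ℂ)*l) * (q^(a*l+1))^m := by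
      intro l _
      rw [tsum_mul_left, tsum_geometric_of_norm_lt_one (habs _ (Nat.succ_ne_zero _)),
        div_eq_mul_inv]
    rw [Finset.sum_congr rfl h1, ← Summable.tsum_finsetSum (fun l _ => hsum l), ← tsum_mul_left]
    apply tsum_congr
    intro m
    have h2 : ∀ l ∈ Finset.range (n+1),
        (n.choose l : ℂ) * (-1)^l * ((a:ℂ)*l) * (q^(a*l+1))^m
        = (a:ℂ) * q^m * ((n.choose l : ℂ) * (-1)^l * l * (q^(a*m))^l) := by
      intro l _
      have he : (q^(a*l+1))^m = (q^(a*m))^l * q^m := by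
        rw [← pow_mul, ← pow_mul, ← pow_add]
        ring_nf
      rw [he]; ring
    rw [Finset.sum_congr rfl h2, ← Finset.mul_sum, key_finite _ n hn,
      mul_comm m a, pow_add]
    ring
  rw [hS]
  ring
end
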